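/- For all z = (x,p) ∈ ℝ^{2n}, the Wigner transform of the generalized coherent state ψ_{X,Y} is given by Wψ_{X,Y}(z) = (πℏ)^{−n} exp(−(1/ℏ) Gz·z), where G is the 2n×2n block matrix G = [[X + Y X⁻¹ Y, Y X⁻¹],[X⁻¹ Y, X⁻¹]]. -/

import Mathlib

open Matrix MeasureTheory Complex Real




lemma quad_coe {n : ℕ} (M : Matrix (Fin n) (Fin n) ℝ) (v w : Fin n → ℝ) :
    ∑ j, ∑ k, (M j k : ℂ) * (v j : ℂ) * (w k : ℂ) = ((v ⬝ᵥ M.mulVec w : ℝ) : ℂ) := by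
  simp only [dotProduct, mulVec, Complex.ofReal_sum, Complex.ofReal_mul, Finset.mul_sum]
  exact Finset.sum_congr rfl fun j _ => Finset.sum_congr rfl fun k _ => by ring

open scoped MatrixOrder in
lemma gaussian_integral_matrix {n : ℕ} {X : Matrix (Fin n) (Fin n) ℝ}
    (hX : X.PosDef) (a : ℝ) (ha : 0 < a) (c : Fin n → ℂ) :
    ∫ y : Fin n → ℝ, Complex.exp (-(a:ℂ) * ∑ j, ∑ k, (X j k : ℂ) * (y j : ℂ) * (y k : ℂ)
        + ∑ j, c j * (y j : ℂ))
      = (((Real.pi / a) ^ ((n : ℝ)/2) / Real.sqrt X.det : ℝ) : ℂ) *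
        Complex.exp ((∑ j, ∑ k, ((X⁻¹) j k : ℂ) * c j * c k) / (4 * (a:ℂ))) := by
  classical
  set S := CFC.sqrt X with hSdef
  have hSS : S * S = X := CFC.sqrt_mul_sqrt_self X hX.posSemidef.nonneg
  have hSsymm : Sᵀ = S := (CFC.sqrt_nonneg X).posSemidef.1
  have hdetS_nonneg : 0 ≤ S.det := by
    rw [(CFC.sqrt_nonneg X).posSemidef.1.det_eq_prod_eigenvalues]
    exact Finset.prod_nonneg fun i _ =>
      (CFC.sqrt_nonneg X).posSemidef.eigenvalues_nonneg i
  have hdetX : 0 < X.det := hX.det_pos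
  have hdetSS : S.det * S.det = X.det := by rw [← det_mul, hSS]
  have hdetS : 0 < S.det := by
    rcases hdetS_nonneg.lt_or_eq with h | h
    · exact h
    · exfalso; rw [← h] at hdetSS; simp at hdetSS; linarith [hdetSS ▸ hdetX]
  have hdetSne : S.det ≠ 0 := hdetS.ne'
  have hdetSinv : (S⁻¹).det ≠ 0 := by
    rw [det_nonsing_inv, Ring.inverse_eq_inv']; exact inv_ne_zero hdetSne
  have hsqrtX : Real.sqrt X.det = S.det := by
    rw [← hdetSS, Real.sqrt_mul_self hdetS.le]
  have hSinvT : (S⁻¹)ᵀ = S⁻¹ := by rw [transpose_nonsing_inv, hSsymm]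
  -- inverse identities
  have hSinvXSinv : S⁻¹ * (X * S⁻¹) = 1 := by
    rw [← hSS, mul_assoc S S S⁻¹, mul_nonsing_inv _ (isUnit_iff_ne_zero.mpr hdetSne),
      mul_one, nonsing_inv_mul _ (isUnit_iff_ne_zero.mpr hdetSne)]
  have hXinv : X⁻¹ = S⁻¹ * S⁻¹ := by rw [← hSS, Matrix.mul_inv_rev]
  -- the function
  set f : (Fin n → ℝ) → ℂ := fun y => Complex.exp
    (-(a:ℂ) * ∑ j, ∑ k, (X j k : ℂ) * (y j : ℂ) * (y k : ℂ) + ∑ j, c j * (y j : ℂ)) with hfdef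
  have hfc : Continuous f := by
    apply Complex.continuous_exp.comp
    apply Continuous.add
    · exact continuous_const.mul (continuous_finset_sum _ fun j _ =>
        continuous_finset_sum _ fun k _ =>
        ((continuous_const.mul ((Complex.continuous_ofReal.comp (continuous_apply j)))).mul
          ((Complex.continuous_ofReal.comp (continuous_apply k)))))
    · exact continuous_finset_sum _ fun j _ =>
        continuous_const.mul (Complex.continuous_ofReal.comp (continuous_apply j))
  -- change of variables
  have hmap : Measure.map (toLin' S⁻¹) (volume : Measure (Fin n → ℝ))
      = ENNReal.ofReal |(S⁻¹).det⁻¹| • volume :=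
    Real.map_matrix_volume_pi_eq_smul_volume_pi hdetSinv
  have hTmeas : AEMeasurable (toLin' S⁻¹) (volume : Measure (Fin n → ℝ)) :=
    (LinearMap.continuous_on_pi _).measurable.aemeasurable
  have hcov : ∫ u : Fin n → ℝ, f (S⁻¹.mulVec u) = S.det * ∫ y, f y := by
    have h1 : ∫ y, f y ∂(Measure.map (toLin' S⁻¹) volume)
        = ∫ u : Fin n → ℝ, f (S⁻¹.mulVec u) := by
      rw [integral_map hTmeas hfc.aestronglyMeasurable]
      simp only [toLin'_apply]
    rw [← h1, hmap, integral_smul_measure]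
    have : |(S⁻¹).det⁻¹| = S.det := by
      rw [det_nonsing_inv, Ring.inverse_eq_inv', inv_inv, abs_of_pos hdetS]
    rw [this, ENNReal.toReal_ofReal hdetS.le]
    simp
  -- the substituted integrand
  set c' : Fin n → ℂ := fun i => ∑ j, ((S⁻¹) j i : ℂ) * c j with hc'def
  have hSinvSymm : (S⁻¹).IsSymm := hSinvT
  have hpt : ∀ u : Fin n → ℝ, f (S⁻¹.mulVec u)
      = Complex.exp (-(a:ℂ) * ∑ i, (u i : ℂ) ^ 2 + ∑ i, c' i * (u i : ℂ)) := by
    intro u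
    have hq : (S⁻¹ *ᵥ u) ⬝ᵥ X *ᵥ (S⁻¹ *ᵥ u) = u ⬝ᵥ u := by
      have h2 : S⁻¹ *ᵥ u = u ᵥ* S⁻¹ := by rw [← mulVec_transpose, hSinvT]
      rw [mulVec_mulVec, h2, dotProduct_mulVec, vecMul_vecMul, ← dotProduct_mulVec,
        hSinvXSinv, one_mulVec]
    have hq2 : ∑ j, ∑ k, (X j k : ℂ) * ((S⁻¹ *ᵥ u) j : ℂ) * ((S⁻¹ *ᵥ u) k : ℂ)
        = ∑ i, (u i : ℂ) ^ 2 := by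
      rw [quad_coe, hq]
      simp [dotProduct, pow_two]
    have hl : ∑ j, c j * (((S⁻¹ *ᵥ u) j : ℝ) : ℂ) = ∑ i, c' i * (u i : ℂ) := by
      simp only [hc'def, mulVec, dotProduct, Complex.ofReal_sum, Complex.ofReal_mul,
        Finset.mul_sum, Finset.sum_mul]
      rw [Finset.sum_comm]
      exact Finset.sum_congr rfl fun i _ => Finset.sum_congr rfl fun j _ => by ring
    simp only [hfdef]
    rw [hq2, hl]
  have hint : ∫ u : Fin n → ℝ, f (S⁻¹.mulVec u)
      = ((Real.pi : ℂ) / (a:ℂ)) ^ ((n:ℂ) / 2) * Complex.exp ((∑ i, c' i ^ 2) / (4 * (a:ℂ))) := by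
    simp_rw [hpt]
    rw [GaussianFourier.integral_cexp_neg_mul_sum_add (b := (a:ℂ)) (by simpa using ha) c']
    simp
  have hc2 : ∑ i, c' i ^ 2 = ∑ j, ∑ k, ((X⁻¹) j k : ℂ) * c j * c k := by
    simp only [hc'def, pow_two, Finset.sum_mul_sum]
    rw [Finset.sum_comm]
    refine Finset.sum_congr rfl fun j _ => ?_
    rw [Finset.sum_comm]
    refine Finset.sum_congr rfl fun k _ => ?_
    rw [hXinv, Matrix.mul_apply]
    push_cast
    rw [Finset.sum_mul, Finset.sum_mul]
    refine Finset.sum_congr rfl fun i _ => ?_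
    rw [hSinvSymm.apply i k]
    ring
  have hpow : ((Real.pi : ℂ) / (a:ℂ)) ^ ((n:ℂ) / 2)
      = (((Real.pi / a) ^ ((n : ℝ)/2) : ℝ) : ℂ) := by
    rw [Complex.ofReal_cpow (div_pos Real.pi_pos ha).le]
    push_cast
    norm_num
  have hfin : ∫ y, f y = (S.det : ℂ)⁻¹ * ∫ u : Fin n → ℝ, f (S⁻¹.mulVec u) := by
    rw [hcov]
    rw [← mul_assoc]
    norm_num [hdetSne]
  rw [hfin, hint, hc2, hpow, hsqrtX]
  push_cast
  ring



lemma sym_swap {n : ℕ} {M : Matrix (Fin n) (Fin n) ℝ} (hM : M.IsSymm) (f g : Fin n → ℂ) :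
    ∑ j, ∑ k, (M j k : ℂ) * f j * g k = ∑ j, ∑ k, (M j k : ℂ) * g j * f k := by
  rw [Finset.sum_comm]
  exact Finset.sum_congr rfl fun j _ => Finset.sum_congr rfl fun k _ => by
    rw [hM.apply j k]; ring

lemma exponent_eq {n : ℕ} (X Y : Matrix (Fin n) (Fin n) ℝ) (hXs : X.IsSymm) (hYs : Y.IsSymm)
    (ℏ : ℝ) (hℏ : ℏ ≠ 0) (x y p : Fin n → ℝ) :
    -(Complex.I / (ℏ : ℂ)) * ∑ j, (p j : ℂ) * (y j : ℂ)
      + (-(1 / (2 * (ℏ : ℂ))) *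
          ∑ j, ∑ k, ((X j k : ℂ) + Complex.I * (Y j k : ℂ)) *
            ((x j + 2⁻¹ * y j : ℝ) : ℂ) * ((x k + 2⁻¹ * y k : ℝ) : ℂ))
      + (-(1 / (2 * (ℏ : ℂ))) *
          ∑ j, ∑ k, ((X j k : ℂ) - Complex.I * (Y j k : ℂ)) *
            ((x j - 2⁻¹ * y j : ℝ) : ℂ) * ((x k - 2⁻¹ * y k : ℝ) : ℂ))
    = -(1 / (ℏ : ℂ)) * ∑ j, ∑ k, (X j k : ℂ) * (x j : ℂ) * (x k : ℂ)
      + (-(((1 / (4 * ℏ) : ℝ) : ℂ)) * ∑ j, ∑ k, (X j k : ℂ) * (y j : ℂ) * (y k : ℂ)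
        + ∑ j, (-(Complex.I / (ℏ : ℂ)) * (((Y *ᵥ x + p) j : ℝ) : ℂ)) * (y j : ℂ)) := by
  have hℏc : (ℏ : ℂ) ≠ 0 := by exact_mod_cast hℏ
  set Sxx := ∑ j, ∑ k, (X j k : ℂ) * (x j : ℂ) * (x k : ℂ) with hSxx
  set Syy := ∑ j, ∑ k, (X j k : ℂ) * (y j : ℂ) * (y k : ℂ) with hSyy
  set T := ∑ j, ∑ k, (Y j k : ℂ) * (y j : ℂ) * (x k : ℂ) with hT
  set P := ∑ j, (p j : ℂ) * (y j : ℂ) with hP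
  set SP := ∑ j, ∑ k, ((X j k : ℂ) + Complex.I * (Y j k : ℂ)) *
          ((x j + 2⁻¹ * y j : ℝ) : ℂ) * ((x k + 2⁻¹ * y k : ℝ) : ℂ) with hSP
  set SM := ∑ j, ∑ k, ((X j k : ℂ) - Complex.I * (Y j k : ℂ)) *
          ((x j - 2⁻¹ * y j : ℝ) : ℂ) * ((x k - 2⁻¹ * y k : ℝ) : ℂ) with hSM0
  have hmerge : SP + SM = 2 * Sxx + (1/2) * Syy + 2 * Complex.I * T := by
    rw [hSP, hSM0]
    rw [← Finset.sum_add_distrib]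
    have step : ∀ j ∈ Finset.univ, (∑ k, ((X j k : ℂ) + Complex.I * (Y j k : ℂ)) *
          ((x j + 2⁻¹ * y j : ℝ) : ℂ) * ((x k + 2⁻¹ * y k : ℝ) : ℂ))
        + (∑ k, ((X j k : ℂ) - Complex.I * (Y j k : ℂ)) *
          ((x j - 2⁻¹ * y j : ℝ) : ℂ) * ((x k - 2⁻¹ * y k : ℝ) : ℂ))
      = ∑ k, (2 * ((X j k : ℂ) * (x j : ℂ) * (x k : ℂ))
          + (1/2) * ((X j k : ℂ) * (y j : ℂ) * (y k : ℂ))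
          + Complex.I * ((Y j k : ℂ) * (x j : ℂ) * (y k : ℂ))
          + Complex.I * ((Y j k : ℂ) * (y j : ℂ) * (x k : ℂ))) := by
      intro j _
      rw [← Finset.sum_add_distrib]
      exact Finset.sum_congr rfl fun k _ => by push_cast; ring
    rw [Finset.sum_congr rfl step]
    simp only [Finset.sum_add_distrib, ← Finset.mul_sum]
    have hA : ∑ j, ∑ k, (Y j k : ℂ) * (x j : ℂ) * (y k : ℂ) = T := by
      rw [sym_swap hYs (fun j => (x j : ℂ)) (fun j => (y j : ℂ))]
    rw [hA]
    ring
  have hSM : SM = 2 * Sxx + (1/2) * Syy + 2 * Complex.I * T - SP := by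
    linear_combination hmerge
  have hlin : ∑ j, (-(Complex.I / (ℏ : ℂ)) * (((Y *ᵥ x + p) j : ℝ) : ℂ)) * (y j : ℂ)
      = -(Complex.I / (ℏ : ℂ)) * (T + P) := by
    simp only [hT, hP, mulVec, dotProduct, Pi.add_apply, Complex.ofReal_add, Complex.ofReal_sum,
      Complex.ofReal_mul]
    rw [mul_add, Finset.mul_sum, Finset.mul_sum, ← Finset.sum_add_distrib]
    refine Finset.sum_congr rfl fun j _ => ?_
    have hthis : (∑ k, (Y j k : ℂ) * (x k : ℂ)) * (y j : ℂ)
        = ∑ k, (Y j k : ℂ) * (y j : ℂ) * (x k : ℂ) := by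
      rw [Finset.sum_mul]; exact Finset.sum_congr rfl fun k _ => by ring
    linear_combination (-(Complex.I / (ℏ : ℂ))) * hthis
  rw [hlin, hSM]
  push_cast
  field_simp
  ring


lemma symm_shift {n : ℕ} {M : Matrix (Fin n) (Fin n) ℝ} (hM : Mᵀ = M) (v w : Fin n → ℝ) :
    (M *ᵥ v) ⬝ᵥ w = v ⬝ᵥ M *ᵥ w := by
  nth_rewrite 1 [← hM]
  rw [mulVec_transpose, ← dotProduct_mulVec]

lemma block_identity {n : ℕ} (X Y : Matrix (Fin n) (Fin n) ℝ)
    (hXs : X.IsSymm) (hYs : Y.IsSymm) (x p : Fin n → ℝ) :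
    x ⬝ᵥ X *ᵥ x + (Y *ᵥ x + p) ⬝ᵥ X⁻¹ *ᵥ (Y *ᵥ x + p)
    = Sum.elim x p ⬝ᵥ (fromBlocks (X + Y * X⁻¹ * Y) (Y * X⁻¹) (X⁻¹ * Y) X⁻¹).mulVec
        (Sum.elim x p) := by
  have hXinvs : X⁻¹ᵀ = X⁻¹ := by rw [transpose_nonsing_inv, hXs.eq]
  rw [fromBlocks_mulVec, sumElim_dotProduct_sumElim]
  simp only [add_mulVec, mulVec_add, dotProduct_add, add_dotProduct, ← mulVec_mulVec]
  rw [symm_shift hYs.eq, symm_shift hYs.eq]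
  simp only [Sum.elim_comp_inl, Sum.elim_comp_inr]
  ring

noncomputable def gaussianState (n : ℕ) (ℏ : ℝ) (X Y : Matrix (Fin n) (Fin n) ℝ)
    (x : Fin n → ℝ) : ℂ :=
  (((X.det / (Real.pi * ℏ) ^ n) ^ ((1 : ℝ) / 4) : ℝ) : ℂ) *
    Complex.exp (-(1 / (2 * (ℏ : ℂ))) *
      ∑ j, ∑ k, ((X j k : ℂ) + Complex.I * (Y j k : ℂ)) * (x j : ℂ) * (x k : ℂ))

theorem wigner_transform_of_gaussian
    (n : ℕ) (hn : 1 ≤ n) (ℏ : ℝ) (hℏ : 0 < ℏ)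
    (X Y : Matrix (Fin n) (Fin n) ℝ)
    (hX : X.IsSymm) (hY : Y.IsSymm) (hXpd : X.PosDef) :
    ∀ x p : Fin n → ℝ,
      (((1 / (2 * Real.pi * ℏ)) ^ n : ℝ) : ℂ) *
          ∫ y : Fin n → ℝ,
            Complex.exp (-(Complex.I / (ℏ : ℂ)) * ∑ j, (p j : ℂ) * (y j : ℂ)) *
              gaussianState n ℏ X Y (x + (2 : ℝ)⁻¹ • y) *
              (starRingEnd ℂ) (gaussianState n ℏ X Y (x - (2 : ℝ)⁻¹ • y)) =
        (((1 / (Real.pi * ℏ)) ^ n : ℝ) : ℂ) *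
          Complex.exp (-(1 / (ℏ : ℂ)) *
            ((Sum.elim x p ⬝ᵥ
              (fromBlocks (X + Y * X⁻¹ * Y) (Y * X⁻¹) (X⁻¹ * Y) X⁻¹).mulVec
                (Sum.elim x p) : ℝ) : ℂ)) := by
  intro x p
  have hℏc : (ℏ : ℂ) ≠ 0 := by exact_mod_cast hℏ.ne'
  have hPp : 0 < Real.pi * ℏ := mul_pos Real.pi_pos hℏ
  have hD : 0 < X.det := hXpd.det_pos
  have ha : 0 < 1 / (4 * ℏ) := by positivity
  -- conjugate of the state
  have hconj : ∀ v : Fin n → ℝ, (starRingEnd ℂ) (gaussianState n ℏ X Y v)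
      = (((X.det / (Real.pi * ℏ) ^ n) ^ ((1 : ℝ) / 4) : ℝ) : ℂ) *
        Complex.exp (-(1 / (2 * (ℏ : ℂ))) *
          ∑ j, ∑ k, ((X j k : ℂ) - Complex.I * (Y j k : ℂ)) * (v j : ℂ) * (v k : ℂ)) := by
    intro v
    rw [gaussianState, _root_.map_mul, Complex.conj_ofReal, ← Complex.exp_conj]
    congr 2
    rw [_root_.map_mul, map_neg, map_div₀, _root_.map_one, _root_.map_mul, Complex.conj_ofReal, map_ofNat, map_sum]
    congr 1
    refine Finset.sum_congr rfl fun j _ => ?_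
    rw [map_sum]
    refine Finset.sum_congr rfl fun k _ => ?_
    simp only [_root_.map_mul, map_add, Complex.conj_ofReal, Complex.conj_I]
    ring
  -- pointwise form of the integrand
  have hpt : ∀ y : Fin n → ℝ,
      Complex.exp (-(Complex.I / (ℏ : ℂ)) * ∑ j, (p j : ℂ) * (y j : ℂ)) *
        gaussianState n ℏ X Y (x + (2 : ℝ)⁻¹ • y) *
        (starRingEnd ℂ) (gaussianState n ℏ X Y (x - (2 : ℝ)⁻¹ • y))
      = ((((X.det / (Real.pi * ℏ) ^ n) ^ ((1 : ℝ) / 4)) ^ 2 : ℝ) : ℂ) *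
          Complex.exp (-(1 / (ℏ : ℂ)) * ∑ j, ∑ k, (X j k : ℂ) * (x j : ℂ) * (x k : ℂ)) *
          Complex.exp (-(((1 / (4 * ℏ) : ℝ) : ℂ)) *
              ∑ j, ∑ k, (X j k : ℂ) * (y j : ℂ) * (y k : ℂ)
            + ∑ j, -(Complex.I / (ℏ : ℂ)) * (((Y *ᵥ x + p) j : ℝ) : ℂ) * (y j : ℂ)) := by
    intro y
    rw [hconj, gaussianState]
    simp only [Pi.add_apply, Pi.sub_apply, Pi.smul_apply, smul_eq_mul]
    have h1 : ∀ A B C : ℂ, Complex.exp A *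
        ((((X.det / (Real.pi * ℏ) ^ n) ^ ((1 : ℝ) / 4) : ℝ) : ℂ) * Complex.exp B) *
        ((((X.det / (Real.pi * ℏ) ^ n) ^ ((1 : ℝ) / 4) : ℝ) : ℂ) * Complex.exp C)
        = ((((X.det / (Real.pi * ℏ) ^ n) ^ ((1 : ℝ) / 4)) ^ 2 : ℝ) : ℂ) *
          Complex.exp (A + B + C) := by
      intro A B C
      rw [Complex.exp_add, Complex.exp_add]
      push_cast
      ring
    rw [h1, exponent_eq X Y hX hY ℏ hℏ.ne' x y p, mul_assoc, ← Complex.exp_add]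
    simp only [Pi.add_apply]
  simp_rw [hpt]
  rw [MeasureTheory.integral_const_mul]
  have hgauss := gaussian_integral_matrix hXpd (1 / (4 * ℏ)) ha
    (fun j => -(Complex.I / (ℏ : ℂ)) * (((Y *ᵥ x + p) j : ℝ) : ℂ))
  beta_reduce at hgauss
  rw [hgauss]
  -- exponent of the Gaussian integral output
  have hEc : (∑ j, ∑ k, ((X⁻¹) j k : ℂ) *
        (-(Complex.I / (ℏ : ℂ)) * (((Y *ᵥ x + p) j : ℝ) : ℂ)) *
        (-(Complex.I / (ℏ : ℂ)) * (((Y *ᵥ x + p) k : ℝ) : ℂ)))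
        / (4 * (((1 / (4 * ℏ) : ℝ)) : ℂ))
      = -(1 / (ℏ : ℂ)) * (((Y *ᵥ x + p) ⬝ᵥ X⁻¹ *ᵥ (Y *ᵥ x + p) : ℝ) : ℂ) := by
    have hnum : (∑ j, ∑ k, ((X⁻¹) j k : ℂ) *
          (-(Complex.I / (ℏ : ℂ)) * (((Y *ᵥ x + p) j : ℝ) : ℂ)) *
          (-(Complex.I / (ℏ : ℂ)) * (((Y *ᵥ x + p) k : ℝ) : ℂ)))
        = -(1 / (ℏ : ℂ))^2 * (((Y *ᵥ x + p) ⬝ᵥ X⁻¹ *ᵥ (Y *ᵥ x + p) : ℝ) : ℂ) := by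
      rw [← quad_coe X⁻¹ (Y *ᵥ x + p) (Y *ᵥ x + p), Finset.mul_sum]
      refine Finset.sum_congr rfl fun j _ => ?_
      rw [Finset.mul_sum]
      refine Finset.sum_congr rfl fun k _ => ?_
      linear_combination (((X⁻¹) j k : ℂ) * (((Y *ᵥ x + p) j : ℝ) : ℂ) *
        (((Y *ᵥ x + p) k : ℝ) : ℂ) / (ℏ : ℂ)^2) * Complex.I_sq
    rw [hnum]
    push_cast
    field_simp
  rw [quad_coe X x x, hEc, mul_mul_mul_comm, ← Complex.exp_add, ← mul_assoc,
    ← Complex.ofReal_mul, ← Complex.ofReal_mul]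
  congr 1
  · -- constants
    congr 1
    have hs0 : Real.sqrt (Real.pi * ℏ) ≠ 0 := (Real.sqrt_pos.mpr hPp).ne'
    have hd0 : Real.sqrt X.det ≠ 0 := (Real.sqrt_pos.mpr hD).ne'
    have hsP : Real.sqrt ((Real.pi * ℏ) ^ n) = (Real.sqrt (Real.pi * ℏ)) ^ n := by
      rw [show (Real.pi * ℏ) ^ n = ((Real.sqrt (Real.pi * ℏ)) ^ n) ^ 2 by
          rw [← pow_mul, mul_comm n 2, pow_mul, Real.sq_sqrt hPp.le],
        Real.sqrt_sq (pow_nonneg (Real.sqrt_nonneg _) _)]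
    have hKr2 : ((X.det / (Real.pi * ℏ) ^ n) ^ ((1 : ℝ) / 4)) ^ 2
        = Real.sqrt X.det / (Real.sqrt (Real.pi * ℏ)) ^ n := by
      rw [← Real.rpow_natCast ((X.det / (Real.pi * ℏ) ^ n) ^ ((1 : ℝ) / 4)) 2,
        ← Real.rpow_mul (by positivity)]
      norm_num
      rw [← Real.sqrt_eq_rpow, Real.sqrt_div hD.le, hsP]
    have hπa : Real.pi / (1 / (4 * ℏ)) = 4 * (Real.pi * ℏ) := by
      field_simp
    have h4P : (4 * (Real.pi * ℏ)) ^ ((n : ℝ) / 2) = (2 * Real.sqrt (Real.pi * ℏ)) ^ n := by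
      have h2s : 2 * Real.sqrt (Real.pi * ℏ) = Real.sqrt (4 * (Real.pi * ℏ)) := by
        rw [Real.sqrt_mul (by norm_num : (0:ℝ) ≤ 4),
          show Real.sqrt (4:ℝ) = 2 by
            rw [show (4:ℝ) = 2^2 by norm_num, Real.sqrt_sq (by norm_num : (0:ℝ) ≤ 2)]]
      rw [h2s, Real.sqrt_eq_rpow, ← Real.rpow_natCast ((4 * (Real.pi * ℏ)) ^ (1/(2:ℝ))) n,
        ← Real.rpow_mul (by positivity)]
      congr 1
      ring
    rw [hKr2, hπa, h4P]
    field_simp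
    rw [← mul_pow, ← mul_pow]; congr 1; field_simp <;> ring
  · -- exponents
    congr 1
    rw [← block_identity X Y hX hY x p]
    push_cast
    ring
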